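/- Let m > 0 and α, β ∈ ℝ, and define f : ℝ → ℝ by f(y) = exp(−∫₀^y [α·sech(mt) + β·tanh(mt)] dt). Then f is square integrable on ℝ if and only if β > 0. -/

import Mathlib

open MeasureTheory Set

private lemma aux_integrable_exp_neg_abs {b : ℝ} (hb : 0 < b) :
    Integrable (fun y : ℝ => Real.exp (-b * |y|)) := by
  set E : ℝ → ℝ := fun y => Real.exp (-b * |y|) with hE
  have h1 : IntegrableOn E (Ioi 0) := by
    apply (exp_neg_integrableOn_Ioi 0 hb).congr_fun _ measurableSet_Ioi
    intro x hx
    simp [hE, abs_of_pos (mem_Ioi.1 hx)]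
  have hIci : IntegrableOn E (Ici 0) := by
    rwa [integrableOn_Ici_iff_integrableOn_Ioi]
  have hInd : Integrable ((Ici (0:ℝ)).indicator E) :=
    (integrable_indicator_iff measurableSet_Ici).2 hIci
  have h2 : IntegrableOn E (Iic 0) := by
    rw [← integrable_indicator_iff measurableSet_Iic]
    apply hInd.comp_neg.congr
    filter_upwards with t
    by_cases ht : t ≤ 0
    · simp [indicator, ht, neg_nonneg.2 ht, hE, abs_neg]
    · simp [indicator, ht, le_of_lt (neg_neg_of_pos (lt_of_not_ge ht)),
        not_le.2 (neg_neg_of_pos (lt_of_not_ge ht)), hE]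
  have h3 : IntegrableOn E (Iic 0 ∪ Ioi 0) := h2.union h1
  rwa [Iic_union_Ioi, integrableOn_univ] at h3

/-- The fermion zero-mode profile
`f(y) = exp(−∫₀^y [α·sech(mt) + β·tanh(mt)] dt)` is square integrable iff `β > 0`. -/
theorem zero_mode_square_integrable_iff
    (m α β : ℝ) (hm : 0 < m)
    (f : ℝ → ℝ)
    (hf : ∀ y : ℝ,
      f y = Real.exp (-(∫ t in (0:ℝ)..y, α * (1 / Real.cosh (m * t)) + β * Real.tanh (m * t)))) :
    MemLp f 2 (volume : Measure ℝ) ↔ 0 < β := by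
  have hm' : m ≠ 0 := hm.ne'
  set g : ℝ → ℝ := fun y =>
    (α / m) * Real.arctan (Real.sinh (m * y)) + (β / m) * Real.log (Real.cosh (m * y)) with hg
  -- derivative of the antiderivative
  have hderiv : ∀ t : ℝ,
      HasDerivAt g (α * (1 / Real.cosh (m * t)) + β * Real.tanh (m * t)) t := by
    intro t
    have hmt : HasDerivAt (fun y : ℝ => m * y) m t := by
      simpa using (hasDerivAt_id t).const_mul m
    have hsinh : HasDerivAt (fun y : ℝ => Real.sinh (m * y)) (Real.cosh (m * t) * m) t :=
      (Real.hasDerivAt_sinh (m * t)).comp t hmt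
    have harctan : HasDerivAt (fun y : ℝ => Real.arctan (Real.sinh (m * y)))
        (1 / (1 + Real.sinh (m * t) ^ 2) * (Real.cosh (m * t) * m)) t :=
      hsinh.arctan
    have hcosh : HasDerivAt (fun y : ℝ => Real.cosh (m * y)) (Real.sinh (m * t) * m) t :=
      (Real.hasDerivAt_cosh (m * t)).comp t hmt
    have hcpos : 0 < Real.cosh (m * t) := Real.cosh_pos _
    have hlog : HasDerivAt (fun y : ℝ => Real.log (Real.cosh (m * y)))
        ((Real.sinh (m * t) * m) / Real.cosh (m * t)) t := hcosh.log hcpos.ne'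
    have h := ((harctan.const_mul (α / m)).add (hlog.const_mul (β / m)))
    refine h.congr_deriv ?_
    symm
    have h1 : 1 + Real.sinh (m * t) ^ 2 = Real.cosh (m * t) ^ 2 := by
      rw [Real.cosh_sq]; ring
    rw [h1, Real.tanh_eq_sinh_div_cosh]
    field_simp
  -- f = exp (-g)
  have hc : Continuous fun t : ℝ => Real.cosh (m * t) :=
    Real.continuous_cosh.comp (continuous_const.mul continuous_id)
  have hcne : ∀ t : ℝ, Real.cosh (m * t) ≠ 0 := fun t => (Real.cosh_pos _).ne'
  have hcont : Continuous fun t : ℝ =>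
      α * (1 / Real.cosh (m * t)) + β * Real.tanh (m * t) := by
    apply Continuous.add
    · exact continuous_const.mul (continuous_const.div hc hcne)
    · apply continuous_const.mul
      have : (fun t : ℝ => Real.tanh (m * t))
          = fun t => Real.sinh (m * t) / Real.cosh (m * t) := by
        funext t; rw [Real.tanh_eq_sinh_div_cosh]
      rw [this]
      exact (Real.continuous_sinh.comp (continuous_const.mul continuous_id)).div hc hcne
  have hg0 : g 0 = 0 := by
    simp [hg]
  have hfg : ∀ y : ℝ, f y = Real.exp (-(g y)) := by
    intro y
    rw [hf y]
    congr 1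
    have hint : (∫ t in (0:ℝ)..y, α * (1 / Real.cosh (m * t)) + β * Real.tanh (m * t))
        = g y - g 0 :=
      intervalIntegral.integral_eq_sub_of_hasDerivAt (fun t _ => hderiv t)
        (hcont.intervalIntegrable 0 y)
    rw [hint, hg0, sub_zero]
  -- continuity and measurability of f
  have hgcont : Continuous g := by
    apply Continuous.add
    · exact continuous_const.mul
        (Real.continuous_arctan.comp
          (Real.continuous_sinh.comp (continuous_const.mul continuous_id)))
    · exact continuous_const.mul (Continuous.log hc hcne)
  have hfcont : Continuous f := by
    have : f = fun y => Real.exp (-(g y)) := funext hfg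
    rw [this]
    exact Real.continuous_exp.comp hgcont.neg
  have hfm : AEStronglyMeasurable f volume := hfcont.aestronglyMeasurable
  -- arctan term bound
  have hK : ∀ y : ℝ, |(α / m) * Real.arctan (Real.sinh (m * y))| ≤ |α| / m * (Real.pi / 2) := by
    intro y
    rw [abs_mul]
    have h1 : |Real.arctan (Real.sinh (m * y))| ≤ Real.pi / 2 :=
      abs_le.2 ⟨(Real.neg_pi_div_two_lt_arctan _).le, (Real.arctan_lt_pi_div_two _).le⟩
    have h2 : |α / m| = |α| / m := by
      rw [abs_div, abs_of_pos hm]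
    rw [h2]
    exact mul_le_mul_of_nonneg_left h1 (by positivity)
  set K : ℝ := |α| / m * (Real.pi / 2) with hKdef
  have hKnonneg : 0 ≤ K := by
    have := Real.pi_pos
    positivity
  have hlogcosh_nonneg : ∀ y : ℝ, 0 ≤ Real.log (Real.cosh (m * y)) := fun y =>
    Real.log_nonneg (Real.one_le_cosh _)
  rw [memLp_two_iff_integrable_sq hfm]
  constructor
  · -- Integrable f² → 0 < β, by contraposition
    intro hInt
    by_contra hβ
    push_neg at hβ
    -- f y ≥ exp (-K) everywhere
    have hlb : ∀ y : ℝ, Real.exp (-K) ≤ f y := by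
      intro y
      rw [hfg y, Real.exp_le_exp, neg_le_neg_iff]
      have h1 : (α / m) * Real.arctan (Real.sinh (m * y)) ≤ K :=
        (le_abs_self _).trans (hK y)
      have h2 : (β / m) * Real.log (Real.cosh (m * y)) ≤ 0 :=
        mul_nonpos_of_nonpos_of_nonneg (div_nonpos_of_nonpos_of_nonneg hβ hm.le)
          (hlogcosh_nonneg y)
      calc g y ≤ K + 0 := add_le_add h1 h2
        _ = K := add_zero K
    have hconst : Integrable (fun _ : ℝ => Real.exp (-K) ^ 2) volume := by
      apply hInt.mono' aestronglyMeasurable_const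
      filter_upwards with y
      have h1 : (0:ℝ) < Real.exp (-K) := Real.exp_pos _
      rw [Real.norm_eq_abs, abs_of_pos (by positivity)]
      have := hlb y
      nlinarith [Real.exp_pos (-K)]
    rw [integrable_const_iff] at hconst
    rcases hconst with h | h
    · exact absurd h (by positivity)
    · have h := measure_lt_top (volume : Measure ℝ) univ
      rw [Real.volume_univ] at h
      exact absurd h (by simp)
  · -- 0 < β → Integrable f²
    intro hβ
    -- pointwise bound f y ^ 2 ≤ exp (2K + 2β/m·log 2) · exp (-2β·|y|)
    have hlogcosh_lb : ∀ y : ℝ, m * |y| - Real.log 2 ≤ Real.log (Real.cosh (m * y)) := by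
      intro y
      have hcoshlb : Real.exp (m * |y|) / 2 ≤ Real.cosh (m * y) := by
        rw [Real.cosh_eq]
        have h1 : Real.exp (m * |y|) ≤ Real.exp (m * y) + Real.exp (-(m * y)) := by
          rcases abs_cases y with ⟨h, _⟩ | ⟨h, _⟩
          · rw [h]
            nlinarith [Real.exp_pos (-(m * y))]
          · rw [h, mul_neg, ← neg_mul]
            nlinarith [Real.exp_pos (m * y)]
        linarith
      have h2 : Real.log (Real.exp (m * |y|) / 2) ≤ Real.log (Real.cosh (m * y)) :=
        Real.log_le_log (by positivity) hcoshlb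
      rwa [Real.log_div (Real.exp_ne_zero _) two_ne_zero, Real.log_exp] at h2
    set c : ℝ := 2 * K + 2 * β / m * Real.log 2 with hcdef
    have hbound : ∀ y : ℝ, f y ^ 2 ≤ Real.exp c * Real.exp (-(2 * β) * |y|) := by
      intro y
      rw [hfg y, ← Real.exp_add, sq, ← Real.exp_add, Real.exp_le_exp]
      have h1 : -K ≤ (α / m) * Real.arctan (Real.sinh (m * y)) := by
        have := (hK y)
        have := neg_abs_le ((α / m) * Real.arctan (Real.sinh (m * y)))
        linarith [abs_le.1 (hK y) |>.1]
      have h2 : (β / m) * (m * |y| - Real.log 2) ≤ (β / m) * Real.log (Real.cosh (m * y)) :=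
        mul_le_mul_of_nonneg_left (hlogcosh_lb y) (by positivity)
      have h3 : (β / m) * (m * |y| - Real.log 2) = β * |y| - β / m * Real.log 2 := by
        field_simp
      have hgy : -K + (β * |y| - β / m * Real.log 2) ≤ g y := by
        rw [hg]
        dsimp only
        rw [← h3]
        linarith
      have : -(g y) + -(g y) ≤ 2 * (K + β / m * Real.log 2 - β * |y|) := by linarith
      calc -(g y) + -(g y) ≤ 2 * (K + β / m * Real.log 2 - β * |y|) := this
        _ = c + -(2 * β) * |y| := by rw [hcdef]; ring
    have hexpint : Integrable (fun y : ℝ => Real.exp c * Real.exp (-(2 * β) * |y|)) volume :=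
      (aux_integrable_exp_neg_abs (by linarith : (0:ℝ) < 2 * β)).const_mul _
    apply hexpint.mono' ((hfcont.pow 2).aestronglyMeasurable)
    filter_upwards with y
    rw [Real.norm_eq_abs, abs_of_nonneg (sq_nonneg _)]
    exact hbound y
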